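/- One-dimensional quadratic case: let φ_k(w) = (1/2)m_k w² + b_k w + c_k with m_k > 0, F(w) = (1/2)m w² + b w + c with m = (1/p)∑m_k, b = (1/p)∑b_k, c = (1/p)∑c_k, R(w) = |w|, P = F + R with minimizer w*. Define P_k(w;a) = (1/2)m_k w² + ((m-m_k)a + b)w + c_k + |w|. Then for all a ∈ ℝ, P(w*) - (1/p)∑_{k=1}^p min_w P_k(w;a) ≤ γ (a - w*)², where γ = (1/p)∑_{k=1}^p (m - m_k)²/m_k. -/

import Mathlib

/-- Subgradient inequality at the minimizer of `w ↦ (1/2) m w² + b w + c + |w|`. -/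
lemma subgrad_abs (m b c w0 : ℝ) (hm : 0 ≤ m)
    (hmin : IsMinOn (fun w : ℝ => (1 / 2) * m * w ^ 2 + b * w + c + |w|) Set.univ w0) :
    ∀ w : ℝ, 0 ≤ (m * w0 + b) * (w - w0) + |w| - |w0| := by
  intro w
  by_contra h
  push_neg at h
  set d := w - w0 with hd
  set L := (m * w0 + b) * d + |w| - |w0| with hL
  have hLneg : L < 0 := h
  have hden : (0:ℝ) < m * d ^ 2 + 1 := by positivity
  set t := min 1 (-L / (m * d ^ 2 + 1)) with ht
  have ht0 : 0 < t := lt_min one_pos (div_pos (by linarith) hden)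
  have ht1 : t ≤ 1 := min_le_left _ _
  have happ := isMinOn_iff.mp hmin (w0 + t * d) (Set.mem_univ _)
  have habs : |w0 + t * d| ≤ (1 - t) * |w0| + t * |w| := by
    have hw : w0 + t * d = (1 - t) * w0 + t * w := by rw [hd]; ring
    rw [hw]
    calc |(1 - t) * w0 + t * w| ≤ |(1 - t) * w0| + |t * w| := abs_add_le _ _
      _ = (1 - t) * |w0| + t * |w| := by
          rw [abs_mul, abs_mul, abs_of_nonneg (by linarith), abs_of_nonneg ht0.le]
  have key : 0 ≤ t * L + (1 / 2) * m * t ^ 2 * d ^ 2 := by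
    rw [hL, hd]
    nlinarith [happ, habs]
  have hsmall : (1 / 2) * m * t * d ^ 2 < -L := by
    have h1 : t ≤ -L / (m * d ^ 2 + 1) := min_le_right _ _
    have h2 : m * d ^ 2 * t ≤ m * d ^ 2 * (-L / (m * d ^ 2 + 1)) :=
      mul_le_mul_of_nonneg_left h1 (by positivity)
    have h3 : m * d ^ 2 * (-L / (m * d ^ 2 + 1)) < -L := by
      rw [mul_div_assoc']
      rw [div_lt_iff₀ hden]
      nlinarith [mul_nonneg hm (sq_nonneg d)]
    nlinarith [mul_nonneg hm (sq_nonneg d), ht0]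
  have h4 : t * ((1 / 2) * m * t * d ^ 2) < t * (-L) :=
    mul_lt_mul_of_pos_left hsmall ht0
  nlinarith [key, h4]

/-- One-dimensional quadratic case of the local-global gap bound (Lemma 4):
`P(w*) - (1/p)∑ₖ min_w P_k(w;a) ≤ γ (a - w*)²` with `γ = (1/p)∑ₖ (m - mₖ)²/mₖ`. -/
theorem local_global_gap_quadratic_1d
    (p : ℕ) (hp : 0 < p)
    (mk bk ck : Fin p → ℝ) (hmk : ∀ k, 0 < mk k)
    (m b c : ℝ)
    (hm : m = (1 / (p : ℝ)) * ∑ k, mk k)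
    (hb : b = (1 / (p : ℝ)) * ∑ k, bk k)
    (hc : c = (1 / (p : ℝ)) * ∑ k, ck k)
    (wstar : ℝ)
    (hwstar : IsMinOn (fun w : ℝ => (1 / 2) * m * w ^ 2 + b * w + c + |w|) Set.univ wstar)
    (wk : Fin p → ℝ → ℝ)
    (hwk : ∀ k a, IsMinOn (fun w : ℝ =>
      (1 / 2) * mk k * w ^ 2 + ((m - mk k) * a + b) * w + ck k + |w|) Set.univ (wk k a))
    (a : ℝ) :
    ((1 / 2) * m * wstar ^ 2 + b * wstar + c + |wstar|) -
      (1 / (p : ℝ)) * ∑ k,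
        ((1 / 2) * mk k * (wk k a) ^ 2 + ((m - mk k) * a + b) * (wk k a) + ck k + |wk k a|)
    ≤ ((1 / (p : ℝ)) * ∑ k, (m - mk k) ^ 2 / mk k) * (a - wstar) ^ 2 := by
  have hp0 : (0:ℝ) < (p:ℝ) := by exact_mod_cast hp
  have hm0 : 0 < m := by
    rw [hm]
    have : 0 < ∑ k, mk k := Finset.sum_pos (fun k _ => hmk k) (by
      simp [Finset.univ_nonempty_iff]
      exact Fin.pos_iff_nonempty.mp hp)
    positivity
  have hsub := subgrad_abs m b c wstar hm0.le hwstar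
  -- per-machine bound
  have key : ∀ k : Fin p,
      ((1 / 2) * mk k * wstar ^ 2 + ((m - mk k) * a + b) * wstar + ck k + |wstar|) -
      ((1 / 2) * mk k * (wk k a) ^ 2 + ((m - mk k) * a + b) * (wk k a) + ck k + |wk k a|)
      ≤ (m - mk k) ^ 2 / mk k * (a - wstar) ^ 2 := by
    intro k
    have hs := hsub (wk k a)
    have hk := hmk k
    have key' : mk k * (((1 / 2) * mk k * wstar ^ 2 + ((m - mk k) * a + b) * wstar + ck k + |wstar|) -
        ((1 / 2) * mk k * (wk k a) ^ 2 + ((m - mk k) * a + b) * (wk k a) + ck k + |wk k a|))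
        ≤ (m - mk k) ^ 2 * (a - wstar) ^ 2 := by
      nlinarith [sq_nonneg (mk k * (wk k a - wstar) + (m - mk k) * (a - wstar)), hk, hs,
        mul_pos hk hk]
    calc ((1 / 2) * mk k * wstar ^ 2 + ((m - mk k) * a + b) * wstar + ck k + |wstar|) -
        ((1 / 2) * mk k * (wk k a) ^ 2 + ((m - mk k) * a + b) * (wk k a) + ck k + |wk k a|)
        = (mk k * (((1 / 2) * mk k * wstar ^ 2 + ((m - mk k) * a + b) * wstar + ck k + |wstar|) -
          ((1 / 2) * mk k * (wk k a) ^ 2 + ((m - mk k) * a + b) * (wk k a) + ck k + |wk k a|))) / mk k := by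
          field_simp
      _ ≤ ((m - mk k) ^ 2 * (a - wstar) ^ 2) / mk k := by
          exact (div_le_div_iff_of_pos_right hk).mpr key'
      _ = (m - mk k) ^ 2 / mk k * (a - wstar) ^ 2 := by ring
  -- sums of coefficients
  have hsum1 : ∑ k, mk k = (p:ℝ) * m := by rw [hm]; field_simp
  have hsum3 : ∑ k, ck k = (p:ℝ) * c := by rw [hc]; field_simp
  -- average of P_k(w*;a) equals P(w*)
  have expand : ∑ k, ((1 / 2) * mk k * wstar ^ 2 + ((m - mk k) * a + b) * wstar + ck k + |wstar|)
      = (p:ℝ) * ((1 / 2) * m * wstar ^ 2 + b * wstar + c + |wstar|) := by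
    have hcongr : ∀ k : Fin p,
        (1 / 2) * mk k * wstar ^ 2 + ((m - mk k) * a + b) * wstar + ck k + |wstar|
        = mk k * ((1 / 2) * wstar ^ 2 - a * wstar) + ck k
            + (m * a * wstar + b * wstar + |wstar|) := by intro k; ring
    rw [Finset.sum_congr rfl (fun k _ => hcongr k), Finset.sum_add_distrib,
      Finset.sum_add_distrib, ← Finset.sum_mul, Finset.sum_const, Finset.card_univ,
      Fintype.card_fin, hsum1, hsum3, nsmul_eq_mul]
    ring
  have hsumle : ∑ k, (((1 / 2) * mk k * wstar ^ 2 + ((m - mk k) * a + b) * wstar + ck k + |wstar|) -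
      ((1 / 2) * mk k * (wk k a) ^ 2 + ((m - mk k) * a + b) * (wk k a) + ck k + |wk k a|))
      ≤ ∑ k, (m - mk k) ^ 2 / mk k * (a - wstar) ^ 2 :=
    Finset.sum_le_sum (fun k _ => key k)
  rw [Finset.sum_sub_distrib, expand] at hsumle
  have hfin : (1 / (p:ℝ)) * (((p:ℝ) * ((1 / 2) * m * wstar ^ 2 + b * wstar + c + |wstar|)) -
      ∑ k, ((1 / 2) * mk k * (wk k a) ^ 2 + ((m - mk k) * a + b) * (wk k a) + ck k + |wk k a|))
      ≤ (1 / (p:ℝ)) * ∑ k, (m - mk k) ^ 2 / mk k * (a - wstar) ^ 2 :=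
    mul_le_mul_of_nonneg_left hsumle (by positivity)
  calc ((1 / 2) * m * wstar ^ 2 + b * wstar + c + |wstar|) -
      (1 / (p : ℝ)) * ∑ k,
        ((1 / 2) * mk k * (wk k a) ^ 2 + ((m - mk k) * a + b) * (wk k a) + ck k + |wk k a|)
      = (1 / (p:ℝ)) * (((p:ℝ) * ((1 / 2) * m * wstar ^ 2 + b * wstar + c + |wstar|)) -
        ∑ k, ((1 / 2) * mk k * (wk k a) ^ 2 + ((m - mk k) * a + b) * (wk k a) + ck k + |wk k a|)) := by
        rw [mul_sub, ← mul_assoc, one_div_mul_cancel hp0.ne', one_mul]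
    _ ≤ (1 / (p:ℝ)) * ∑ k, (m - mk k) ^ 2 / mk k * (a - wstar) ^ 2 := hfin
    _ = ((1 / (p : ℝ)) * ∑ k, (m - mk k) ^ 2 / mk k) * (a - wstar) ^ 2 := by
        rw [← Finset.sum_mul]; ring
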